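/- In any simple directed graph G, for every d ≥ 2, the number of completed almost-d-simplices of G (those almost-d-simplices ({σ, σ'}, e) with e ∈ E) equals C(d+1, 2) times the number of d-simplices of G. -/
import Mathlib

def IsSimplex {V : Type*} (E : V → V → Prop) {m : ℕ} (σ : Fin m → V) : Prop :=
  Function.Injective σ ∧ ∀ i j : Fin m, i < j → E (σ i) (σ j)

def IsAlmostSimplex {V : Type*} (E : V → V → Prop) {m : ℕ}
    (σ σ' : Fin (m + 1) → V) (e : V × V) : Prop :=
  IsSimplex E σ ∧ IsSimplex E σ' ∧
  ∃ i i' : Fin (m + 1),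
    σ ∘ i.succAbove = σ' ∘ i'.succAbove ∧
    σ i ≠ σ' i' ∧
    ((i ≤ i' ∧ e = (σ i, σ' i')) ∨ (i' ≤ i ∧ e = (σ' i', σ i)))

lemma succAbove_val' {n : ℕ} (p : Fin (n+1)) (k : Fin n) :
    ((p.succAbove k : Fin (n+1)) : ℕ) = if (k:ℕ) < (p:ℕ) then (k:ℕ) else (k:ℕ)+1 := by
  rw [Fin.succAbove]
  by_cases h : (k:ℕ) < (p:ℕ)
  · rw [if_pos (Fin.lt_def.mpr (by simpa using h)), if_pos h]; rfl
  · rw [if_neg (fun hc => h (by simpa using Fin.lt_def.mp hc)), if_neg h]; rfl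

section helpers

variable {V : Type*} {E : V → V → Prop}

lemma isSimplex_comp {m : ℕ} {τ : Fin (m+1) → V} (h : IsSimplex E τ) (p : Fin (m+1)) :
    IsSimplex E (τ ∘ p.succAbove) :=
  ⟨h.1.comp (Fin.succAbove_right_injective),
   fun i j hij => h.2 _ _ (Fin.succAbove_lt_succAbove_iff.mpr hij)⟩

lemma almost_of_simplex {n : ℕ} {τ : Fin (n+3) → V} (hτ : IsSimplex E τ)
    {i j : Fin (n+3)} (hij : i < j) :
    IsAlmostSimplex E (τ ∘ j.succAbove) (τ ∘ i.succAbove) (τ i, τ j) := by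
  have hi : (i:ℕ) < (j:ℕ) := hij
  have hj : (j:ℕ) < n+3 := j.isLt
  obtain ⟨a, ha⟩ : ∃ a : Fin (n+2), (a:ℕ) = (i:ℕ) := ⟨⟨(i:ℕ), by omega⟩, rfl⟩
  obtain ⟨b, hb⟩ : ∃ b : Fin (n+2), (b:ℕ) = (j:ℕ)-1 := ⟨⟨(j:ℕ)-1, by omega⟩, rfl⟩
  have h1 : j.succAbove a = i := by
    apply Fin.ext; rw [succAbove_val', ha]; split_ifs <;> omega
  have h2 : i.succAbove b = j := by
    apply Fin.ext; rw [succAbove_val', hb]; split_ifs <;> omega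
  refine ⟨isSimplex_comp hτ j, isSimplex_comp hτ i, a, b, ?_, ?_, Or.inl ⟨?_, ?_⟩⟩
  · funext k
    show τ (j.succAbove (a.succAbove k)) = τ (i.succAbove (b.succAbove k))
    congr 1
    apply Fin.ext
    simp only [succAbove_val', ha, hb]
    split_ifs <;> omega
  · show τ (j.succAbove a) ≠ τ (i.succAbove b)
    rw [h1, h2]
    exact fun hc => (Nat.ne_of_lt hi) (congrArg Fin.val (hτ.1 hc))
  · rw [Fin.le_def, ha, hb]; omega
  · show (τ i, τ j) = (τ (j.succAbove a), τ (i.succAbove b))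
    rw [h1, h2]

/-- Injectivity core. -/
lemma phi_inj_core {n : ℕ} {τ τ' : Fin (n+3) → V}
    (hτ : Function.Injective τ) (hτ' : Function.Injective τ')
    {i j i' j' : Fin (n+3)} (hij : i < j) (hij' : i' < j')
    (hS : s(τ ∘ j.succAbove, τ ∘ i.succAbove) = s(τ' ∘ j'.succAbove, τ' ∘ i'.succAbove))
    (he1 : τ i = τ' i') (he2 : τ j = τ' j') :
    τ = τ' ∧ i = i' ∧ j = j' := by
  have hi : (i:ℕ) < (j:ℕ) := hij
  have hi' : (i':ℕ) < (j':ℕ) := hij'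
  have hj : (j:ℕ) < n+3 := j.isLt
  have hj' : (j':ℕ) < n+3 := j'.isLt
  rw [Sym2.eq_iff] at hS
  rcases hS with ⟨H1, H2⟩ | ⟨H1, H2⟩
  · -- aligned case
    -- step 1 : i = i'
    obtain ⟨a, ha⟩ : ∃ a : Fin (n+2), (a:ℕ) = (i:ℕ) := ⟨⟨(i:ℕ), by omega⟩, rfl⟩
    obtain ⟨a', ha'⟩ : ∃ a : Fin (n+2), (a:ℕ) = (i':ℕ) := ⟨⟨(i':ℕ), by omega⟩, rfl⟩
    have h1 : j.succAbove a = i := by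
      apply Fin.ext; rw [succAbove_val', ha]; split_ifs <;> omega
    have h1' : j'.succAbove a' = i' := by
      apply Fin.ext; rw [succAbove_val', ha']; split_ifs <;> omega
    have e1 := congrFun H1 a
    have e2 := congrFun H1 a'
    simp only [Function.comp_apply] at e1 e2
    rw [h1, he1] at e1
    rw [h1', ← he1] at e2
    have v1 : ((j'.succAbove a : Fin (n+3)) : ℕ) = (i':ℕ) := congrArg Fin.val (hτ' e1.symm)
    have v2 : ((j.succAbove a' : Fin (n+3)) : ℕ) = (i:ℕ) := congrArg Fin.val (hτ e2)
    rw [succAbove_val', ha] at v1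
    rw [succAbove_val', ha'] at v2
    have hii' : i = i' := by apply Fin.ext; split_ifs at v1 v2 <;> omega
    subst hii'
    -- step 2 : j = j'
    obtain ⟨m, hm⟩ := Fin.exists_succAbove_eq (show j ≠ i from (Fin.lt_def.mpr hi).ne')
    have e3 : τ' j' = τ' (i.succAbove m) := by
      rw [← he2, ← hm]
      exact congrFun H2 m
    have v3 : (j':ℕ) = ((i.succAbove m : Fin (n+3)) : ℕ) := congrArg Fin.val (hτ' e3)
    have vm : ((i.succAbove m : Fin (n+3)) : ℕ) = (j:ℕ) := congrArg Fin.val hm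
    rw [succAbove_val'] at v3 vm
    have hjj' : j = j' := by apply Fin.ext; split_ifs at v3 vm <;> omega
    subst hjj'
    -- step 3 : τ = τ'
    refine ⟨funext fun k => ?_, rfl, rfl⟩
    rcases eq_or_ne k i with rfl | hk
    · exact he1
    · obtain ⟨m, hm⟩ := Fin.exists_succAbove_eq hk
      have := congrFun H2 m
      simp only [Function.comp_apply] at this
      rw [hm] at this
      exact this
  · -- crossed case : contradiction
    exfalso
    obtain ⟨m, hm⟩ := Fin.exists_succAbove_eq (show i ≠ j from hij.ne)
    have e1 := congrFun H1 m
    simp only [Function.comp_apply] at e1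
    rw [hm, he1] at e1
    exact Fin.succAbove_ne i' m (hτ' e1.symm)

end helpers

section core
variable {V : Type*} {E : V → V → Prop}

/-- The insertion core lemma. -/
lemma simplex_of_almost_core {n : ℕ} {σ σ' : Fin (n+2) → V}
    (hσ : IsSimplex E σ) (hσ' : IsSimplex E σ') {i i' : Fin (n+2)} (hii' : i ≤ i')
    (hC : σ ∘ i.succAbove = σ' ∘ i'.succAbove) (hne : σ i ≠ σ' i')
    (he : E (σ i) (σ' i')) :
    ∃ (τ : Fin (n+3) → V) (a b : Fin (n+3)), IsSimplex E τ ∧ a < b ∧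
      σ = τ ∘ b.succAbove ∧ σ' = τ ∘ a.succAbove ∧ τ a = σ i ∧ τ b = σ' i' := by
  have hii : (i:ℕ) ≤ (i':ℕ) := hii'
  have hi2 : (i':ℕ) < n+2 := i'.isLt
  have hi1 : (i:ℕ) < n+2 := i.isLt
  set b : Fin (n+3) := i'.succ with hbdef
  set a : Fin (n+3) := i.castSucc with hadef
  have hbv : (b:ℕ) = (i':ℕ)+1 := rfl
  have hav : (a:ℕ) = (i:ℕ) := rfl
  set τ : Fin (n+3) → V := Fin.insertNth b (σ' i') σ with hτdef
  have hτb : ∀ k, τ (b.succAbove k) = σ k := fun k => Fin.insertNth_apply_succAbove b _ _ k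
  have hbb : τ b = σ' i' := Fin.insertNth_apply_same b _ _
  -- σ' i' is not a value of σ
  have hnotin : ∀ k, σ k ≠ σ' i' := by
    intro k hk
    rcases eq_or_ne k i with rfl | hki
    · exact hne hk
    · obtain ⟨m, hm⟩ := Fin.exists_succAbove_eq hki
      have hCm := congrFun hC m
      simp only [Function.comp_apply] at hCm
      rw [hm] at hCm
      rw [hCm] at hk
      exact Fin.succAbove_ne i' m (hσ'.1 hk)
  have hab : a < b := by rw [Fin.lt_def, hav, hbv]; omega
  have hτa : ∀ k, τ (a.succAbove k) = σ' k := by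
    intro k
    rcases eq_or_ne k i' with heq | hk
    · rw [heq]
      have h : a.succAbove i' = b := by
        apply Fin.ext; rw [succAbove_val', hav, hbv]; split_ifs <;> omega
      rw [h, hbb]
    · obtain ⟨m, hm⟩ := Fin.exists_succAbove_eq hk
      have hCm := congrFun hC m
      simp only [Function.comp_apply] at hCm
      rw [hm] at hCm
      rw [← hCm, ← hτb (i.succAbove m)]
      congr 1
      apply Fin.ext
      have hkv := congrArg Fin.val hm
      rw [succAbove_val'] at hkv
      simp only [succAbove_val', hav, hbv]
      split_ifs at hkv ⊢ <;> omega
  have hinj : Function.Injective τ := by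
    intro x y hxy
    rcases eq_or_ne x b with rfl | hx
    · rcases eq_or_ne y b with rfl | hy
      · rfl
      · obtain ⟨m, hm⟩ := Fin.exists_succAbove_eq hy
        rw [← hm, hτb, hbb] at hxy
        exact absurd hxy.symm (hnotin m)
    · obtain ⟨mx, hmx⟩ := Fin.exists_succAbove_eq hx
      rcases eq_or_ne y b with rfl | hy
      · rw [← hmx, hτb, hbb] at hxy
        exact absurd hxy (hnotin mx)
      · obtain ⟨my, hmy⟩ := Fin.exists_succAbove_eq hy
        rw [← hmx, ← hmy, hτb, hτb] at hxy
        rw [← hmx, ← hmy, hσ.1 hxy]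
  have hedge : ∀ x y : Fin (n+3), x < y → E (τ x) (τ y) := by
    intro x y hxy
    rcases eq_or_ne x b with rfl | hx
    · -- x = b < y ; τ x = σ' i'
      obtain ⟨m, hm⟩ := Fin.exists_succAbove_eq (show y ≠ b from hxy.ne')
      have hmv : (i':ℕ) < (m:ℕ) := by
        have := Fin.lt_def.mp hxy
        rw [← hm, succAbove_val', hbv] at this
        split_ifs at this <;> omega
      have hmi : m ≠ i := by
        intro hc; rw [hc] at hmv; omega
      obtain ⟨p, hp⟩ := Fin.exists_succAbove_eq hmi
      have hCp := congrFun hC p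
      simp only [Function.comp_apply] at hCp
      rw [hp] at hCp
      rw [← hm, hτb, hbb, hCp]
      apply hσ'.2
      rw [Fin.lt_def, succAbove_val']
      have hpv : ((i.succAbove p : Fin (n+2)) : ℕ) = (m:ℕ) := congrArg Fin.val hp
      rw [succAbove_val'] at hpv
      split_ifs at hpv ⊢ <;> omega
    · obtain ⟨mx, hmx⟩ := Fin.exists_succAbove_eq hx
      rcases eq_or_ne y b with rfl | hy
      · -- x < b = y
        have hmxv : (mx:ℕ) ≤ (i':ℕ) := by
          have := Fin.lt_def.mp hxy
          rw [← hmx, succAbove_val', hbv] at this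
          split_ifs at this <;> omega
        rw [← hmx, hτb, hbb]
        rcases eq_or_ne mx i with rfl | hmi
        · exact he
        · obtain ⟨p, hp⟩ := Fin.exists_succAbove_eq hmi
          have hCp := congrFun hC p
          simp only [Function.comp_apply] at hCp
          rw [hp] at hCp
          rw [hCp]
          apply hσ'.2
          rw [Fin.lt_def, succAbove_val']
          have hpv : ((i.succAbove p : Fin (n+2)) : ℕ) = (mx:ℕ) := congrArg Fin.val hp
          rw [succAbove_val'] at hpv
          split_ifs at hpv ⊢ <;> omega
      · obtain ⟨my, hmy⟩ := Fin.exists_succAbove_eq hy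
        rw [← hmx, ← hmy, hτb, hτb]
        apply hσ.2
        rw [← hmx, ← hmy] at hxy
        exact Fin.succAbove_lt_succAbove_iff.mp hxy
  refine ⟨τ, a, b, ⟨hinj, hedge⟩, hab, funext fun k => (hτb k).symm,
    funext fun k => (hτa k).symm, ?_, hbb⟩
  -- τ a = σ i
  obtain ⟨p, hp⟩ : ∃ p : Fin (n+2), b.succAbove p = a := by
    refine ⟨⟨(i:ℕ), by omega⟩, ?_⟩
    apply Fin.ext; rw [succAbove_val', hbv]; simp only [Fin.val_mk, hav]; split_ifs <;> omega
  rw [← hp, hτb]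
  congr 1
  apply Fin.ext
  have := congrArg Fin.val hp
  rw [succAbove_val', hbv, hav] at this
  split_ifs at this <;> omega

end core

section main
variable {V : Type*} {E : V → V → Prop}

lemma exists_simplex_of_almost {n : ℕ} {σ σ' : Fin (n+2) → V} {e : V × V}
    (h : IsAlmostSimplex E σ σ' e) (he : E e.1 e.2) :
    ∃ (τ : Fin (n+3) → V) (a b : Fin (n+3)), IsSimplex E τ ∧ a < b ∧
      s(σ, σ') = s(τ ∘ b.succAbove, τ ∘ a.succAbove) ∧ e = (τ a, τ b) := by
  obtain ⟨hσ, hσ', i, i', hC, hne, hdisj⟩ := h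
  rcases hdisj with ⟨hle, hee⟩ | ⟨hle, hee⟩
  · have heE : E (σ i) (σ' i') := by rw [hee] at he; exact he
    obtain ⟨τ, a, b, hτ, hab, h1, h2, h3, h4⟩ :=
      simplex_of_almost_core hσ hσ' hle hC hne heE
    exact ⟨τ, a, b, hτ, hab, by rw [← h1, ← h2], by rw [hee, h3, h4]⟩
  · have heE : E (σ' i') (σ i) := by rw [hee] at he; exact he
    obtain ⟨τ, a, b, hτ, hab, h1, h2, h3, h4⟩ :=
      simplex_of_almost_core hσ' hσ hle hC.symm (Ne.symm hne) heE
    refine ⟨τ, a, b, hτ, hab, ?_, by rw [hee, h3, h4]⟩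
    rw [← h1, ← h2]
    exact Sym2.eq_swap

end main

theorem completed_almost_simplices_count {V : Type*} [Fintype V]
    (E : V → V → Prop) (hE : Irreflexive E) (n : ℕ) :
    {x : Sym2 (Fin (n + 2) → V) × (V × V) |
        (∃ σ σ', x.1 = s(σ, σ') ∧ IsAlmostSimplex E σ σ' x.2) ∧ E x.2.1 x.2.2}.ncard
      = Nat.choose (n + 3) 2 * {τ : Fin (n + 3) → V | IsSimplex E τ}.ncard := by
  classical
  set T : Set (Fin (n+3) → V) := {τ | IsSimplex E τ} with hT
  set P : Set (Fin (n+3) × Fin (n+3)) := {p | p.1 < p.2} with hP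
  set Φ : (Fin (n+3) → V) × (Fin (n+3) × Fin (n+3)) → Sym2 (Fin (n+2) → V) × (V × V) :=
    fun y => (s(y.1 ∘ y.2.2.succAbove, y.1 ∘ y.2.1.succAbove), (y.1 y.2.1, y.1 y.2.2)) with hΦ
  have himg : {x : Sym2 (Fin (n + 2) → V) × (V × V) |
        (∃ σ σ', x.1 = s(σ, σ') ∧ IsAlmostSimplex E σ σ' x.2) ∧ E x.2.1 x.2.2}
      = Φ '' (T ×ˢ P) := by
    ext x
    constructor
    · rintro ⟨⟨σ, σ', hx1, hAS⟩, hEx⟩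
      obtain ⟨τ, a, b, hτ, hab, hs, hexy⟩ := exists_simplex_of_almost hAS hEx
      refine ⟨(τ, (a, b)), ⟨hτ, hab⟩, ?_⟩
      have h1 : (Φ (τ, (a, b))).1 = x.1 := by
        show s(τ ∘ b.succAbove, τ ∘ a.succAbove) = x.1
        rw [hx1, hs]
      have h2 : (Φ (τ, (a, b))).2 = x.2 := hexy.symm
      exact Prod.ext h1 h2
    · rintro ⟨⟨τ, i, j⟩, ⟨hτ, hij⟩, rfl⟩
      exact ⟨⟨τ ∘ j.succAbove, τ ∘ i.succAbove, rfl, almost_of_simplex hτ hij⟩,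
        hτ.2 i j hij⟩
  have hinj : Set.InjOn Φ (T ×ˢ P) := by
    rintro ⟨τ, i, j⟩ ⟨hτ, hij⟩ ⟨τ', i', j'⟩ ⟨hτ', hij'⟩ heq
    simp only [hΦ, Prod.mk.injEq] at heq
    obtain ⟨hS, he1, he2⟩ := heq
    obtain ⟨hτeq, hieq, hjeq⟩ := phi_inj_core hτ.1 hτ'.1 hij hij' hS he1 he2
    exact Prod.ext hτeq (Prod.ext hieq hjeq)
  rw [himg, Set.ncard_image_of_injOn hinj]
  have hprod : (T ×ˢ P).ncard = P.ncard * T.ncard := by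
    rw [← Nat.card_coe_set_eq, ← Nat.card_coe_set_eq, ← Nat.card_coe_set_eq,
      Nat.card_congr (Equiv.Set.prod T P), Nat.card_prod, Nat.mul_comm]
  have hPcard : P.ncard = (n+3).choose 2 := by
    rw [← Nat.card_coe_set_eq]
    have eqv : ↥P ≃ (Σ j : Fin (n+3), Fin (j:ℕ)) :=
      { toFun := fun p => ⟨p.1.2, ⟨(p.1.1 : ℕ), p.2⟩⟩
        invFun := fun q => ⟨(⟨(q.2:ℕ), lt_trans q.2.isLt q.1.isLt⟩, q.1), q.2.isLt⟩
        left_inv := fun p => rfl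
        right_inv := fun q => rfl }
    rw [Nat.card_congr eqv, Nat.card_eq_fintype_card, Fintype.card_sigma]
    simp only [Fintype.card_fin]
    rw [Fin.sum_univ_eq_sum_range (fun k => k), Finset.sum_range_id, Nat.choose_two_right]
  rw [hprod, hPcard]
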